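/- For every positive integer n, the set T_n of all block transpositions is invariant under the toric map f̄ and under the reverse map g: the image of T_n under f̄ equals T_n, and the image of T_n under g equals T_n. -/

import Mathlib

/-- Auxiliary function: the action of the block transposition with cut points
`(i,j,k)` on `{1,…,n}`, written 1-based. -/
def btFun (i j k t : ℕ) : ℕ :=
  if t ≤ i ∨ k < t then t
  else if t ≤ k - j + i then t + j - i
  else t + j - k

theorem btFun_lb {i j k t : ℕ} (h1 : 1 ≤ t) : 1 ≤ btFun i j k t := by
  unfold btFun; split_ifs <;> omega

theorem btFun_ub {i j k t n : ℕ} (ht : t ≤ n) (hjk : j ≤ k) (hkn : k ≤ n) :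
    btFun i j k t ≤ n := by
  unfold btFun; split_ifs <;> omega

theorem btFun_inv {i j k : ℕ} (hij : i < j) (hjk : j < k) (t : ℕ) :
    btFun i (k - j + i) k (btFun i j k t) = t := by
  unfold btFun; split_ifs <;> omega

theorem btFun_inv' {i j k : ℕ} (hij : i < j) (hjk : j < k) (t : ℕ) :
    btFun i j k (btFun i (k - j + i) k t) = t := by
  have h := btFun_inv (i := i) (j := k - j + i) (k := k) (by omega) (by omega) t
  have e : k - (k - j + i) + i = j := by omega
  rwa [e] at h

/-- The block transposition `σ(i,j,k)` as a permutation of `Fin n`,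
where `t : Fin n` encodes the element `t.val + 1` of `{1,…,n}`. -/
def blockT (n i j k : ℕ) (hij : i < j) (hjk : j < k) (hkn : k ≤ n) :
    Equiv.Perm (Fin n) where
  toFun t := ⟨btFun i j k (t.1 + 1) - 1, by
    have h0 := t.isLt
    have h1 := btFun_lb (i := i) (j := j) (k := k) (t := t.1 + 1) (by omega)
    have h2 := btFun_ub (i := i) (j := j) (k := k) (t := t.1 + 1) (n := n)
      (by omega) (by omega) hkn
    omega⟩
  invFun t := ⟨btFun i (k - j + i) k (t.1 + 1) - 1, by
    have h0 := t.isLt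
    have h1 := btFun_lb (i := i) (j := k - j + i) (k := k) (t := t.1 + 1) (by omega)
    have h2 := btFun_ub (i := i) (j := k - j + i) (k := k) (t := t.1 + 1) (n := n)
      (by omega) (by omega) hkn
    omega⟩
  left_inv t := by
    have h1 := btFun_lb (i := i) (j := j) (k := k) (t := t.1 + 1) (by omega)
    have h2 := btFun_inv hij hjk (t.1 + 1)
    apply Fin.ext
    simp only
    have h3 : btFun i j k (t.1 + 1) - 1 + 1 = btFun i j k (t.1 + 1) := by omega
    rw [h3, h2]
    omega
  right_inv t := by
    have h1 := btFun_lb (i := i) (j := k - j + i) (k := k) (t := t.1 + 1) (by omega)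
    have h2 := btFun_inv' hij hjk (t.1 + 1)
    apply Fin.ext
    simp only
    have h3 : btFun i (k - j + i) k (t.1 + 1) - 1 + 1 = btFun i (k - j + i) k (t.1 + 1) := by
      omega
    rw [h3, h2]
    omega

/-- `T_n`: the set of all block transpositions on `{1,…,n}`. -/
def blockTranspositions (n : ℕ) : Set (Equiv.Perm (Fin n)) :=
  {π | ∃ (i j k : ℕ) (hij : i < j) (hjk : j < k) (hkn : k ≤ n),
      blockT n i j k hij hjk hkn = π}

theorem blockT_inv {n i j k : ℕ} (hij : i < j) (hjk : j < k) (hkn : k ≤ n) :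
    (blockT n i j k hij hjk hkn)⁻¹
      = blockT n i (k - j + i) k (by omega) (by omega) hkn :=
  Equiv.ext fun _ => rfl

theorem blockTranspositions_inv_mem {n : ℕ} {π : Equiv.Perm (Fin n)}
    (h : π ∈ blockTranspositions n) : π⁻¹ ∈ blockTranspositions n := by
  obtain ⟨i, j, k, hij, hjk, hkn, rfl⟩ := h
  exact ⟨i, k - j + i, k, by omega, by omega, hkn, (blockT_inv hij hjk hkn).symm⟩

/-- The Cayley graph `Cay(Sym_n, T_n)`. -/
def cayleyT (n : ℕ) : SimpleGraph (Equiv.Perm (Fin n)) where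
  Adj π ρ := π ≠ ρ ∧ π⁻¹ * ρ ∈ blockTranspositions n
  symm := ⟨by
    rintro π ρ ⟨hne, hmem⟩
    refine ⟨hne.symm, ?_⟩
    have h := blockTranspositions_inv_mem hmem
    rwa [mul_inv_rev, inv_inv] at h⟩
  loopless := ⟨fun π h => h.1 rfl⟩

def ext0 {n : ℕ} (π : Equiv.Perm (Fin n)) : Equiv.Perm (Fin (n + 1)) where
  toFun x := Fin.cases 0 (fun t => (π t).succ) x
  invFun x := Fin.cases 0 (fun t => (π⁻¹ t).succ) x
  left_inv x := by
    cases x using Fin.cases with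
    | zero => simp
    | succ t => simp
  right_inv x := by
    cases x using Fin.cases with
    | zero => simp
    | succ t => simp

theorem ext0_zero {n : ℕ} (π : Equiv.Perm (Fin n)) : ext0 π 0 = 0 := by
  simp [ext0]

open Fin.NatCast

theorem finRotate_pow_apply {n : ℕ} (m : ℕ) (x : Fin (n + 1)) :
    ((finRotate (n + 1)) ^ m) x = x + (m : Fin (n + 1)) := by
  induction m with
  | zero => simp
  | succ m ih =>
      rw [pow_succ', Equiv.Perm.mul_apply, finRotate_succ_apply, ih]
      open Fin.CommRing in (push_cast; ring)

/-- The auxiliary permutation `α^(n+1-r) ∘ [0 π] ∘ α^(π⁻¹(r))` of `{0,1,…,n}`. -/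
def toricAux (n r : ℕ) (π : Equiv.Perm (Fin n)) : Equiv.Perm (Fin (n + 1)) :=
  (finRotate (n + 1)) ^ (n + 1 - r) * ext0 π *
    (finRotate (n + 1)) ^ (((ext0 π)⁻¹ (r : Fin (n + 1))) : ℕ)

theorem toricAux_apply_zero (n r : ℕ) (hr : r ≤ n) (π : Equiv.Perm (Fin n)) :
    toricAux n r π 0 = 0 := by
  unfold toricAux
  have h : r + (n + 1 - r) = n + 1 := by omega
  rw [Equiv.Perm.mul_apply, Equiv.Perm.mul_apply, finRotate_pow_apply,
    finRotate_pow_apply, zero_add, Fin.cast_val_eq_self,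
    Equiv.Perm.coe_inv, Equiv.apply_symm_apply, ← Nat.cast_add, h, Fin.natCast_self]

/-- Restriction of a permutation of `{0,1,…,n}` fixing `0` to a permutation of `{1,…,n}`. -/
def unext0 {n : ℕ} (τ : Equiv.Perm (Fin (n + 1))) (h : τ 0 = 0) : Equiv.Perm (Fin n) where
  toFun t := (τ t.succ).pred (by
    intro hc
    exact Fin.succ_ne_zero t (τ.injective (hc.trans h.symm)))
  invFun t := (τ⁻¹ t.succ).pred (by
    intro hc
    have h' : τ⁻¹ 0 = 0 := by
      conv_lhs => rw [← h]
      exact τ.symm_apply_apply 0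
    exact Fin.succ_ne_zero t (τ⁻¹.injective (hc.trans h'.symm)))
  left_inv t := by
    apply Fin.succ_injective
    rw [Fin.succ_pred, Fin.succ_pred, Equiv.Perm.coe_inv, Equiv.symm_apply_apply]
  right_inv t := by
    apply Fin.succ_injective
    rw [Fin.succ_pred, Fin.succ_pred, Equiv.Perm.coe_inv, Equiv.apply_symm_apply]

/-- The toric map `f̄_r` on `Sym_n`. -/
def toricMap (n r : ℕ) (hr : r ≤ n) (π : Equiv.Perm (Fin n)) : Equiv.Perm (Fin n) :=
  unext0 (toricAux n r π) (toricAux_apply_zero n r hr π)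

/-- The reversal `w : t ↦ n+1-t` of `{1,…,n}`, in the `Fin n` encoding. -/
def wrev (n : ℕ) : Equiv.Perm (Fin n) where
  toFun t := ⟨n - 1 - t.val, by have := t.isLt; omega⟩
  invFun t := ⟨n - 1 - t.val, by have := t.isLt; omega⟩
  left_inv t := by
    have := t.isLt
    apply Fin.ext
    simp only
    omega
  right_inv t := by
    have := t.isLt
    apply Fin.ext
    simp only
    omega

theorem wrev_wrev {n : ℕ} (t : Fin n) : wrev n (wrev n t) = t := by
  have := t.isLt
  apply Fin.ext
  simp only [wrev, Equiv.coe_fn_mk]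
  omega

/-- The reverse map `g` on `Sym_n`: `g(π) = w ∘ π ∘ w`,
i.e. `(g π)(t) = n+1-π(n+1-t)` in 1-based notation. -/
def revMap {n : ℕ} (π : Equiv.Perm (Fin n)) : Equiv.Perm (Fin n) :=
  wrev n * π * wrev n

theorem revMap_revMap {n : ℕ} (π : Equiv.Perm (Fin n)) : revMap (revMap π) = π := by
  ext t
  simp only [revMap, Equiv.Perm.mul_apply]
  rw [wrev_wrev, wrev_wrev]


theorem ext0_apply_succ {n : ℕ} (π : Equiv.Perm (Fin n)) (t : Fin n) :
    ext0 π t.succ = (π t).succ := by simp [ext0]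

theorem ext0_apply_val {n : ℕ} (π : Equiv.Perm (Fin n)) (x : Fin (n+1)) (hx : 0 < x.val) :
    (ext0 π x).val = (π ⟨x.val - 1, by omega⟩).val + 1 := by
  obtain ⟨v, hv⟩ := x
  simp only at hx ⊢
  have hlt : v - 1 < n := by omega
  have hx' : (⟨v, hv⟩ : Fin (n+1)) = Fin.succ ⟨v - 1, hlt⟩ := by
    apply Fin.ext; simp [Fin.val_succ]; omega
  conv_lhs => rw [hx', ext0_apply_succ]
  simp [Fin.val_succ]

theorem ext0_inv_one {n : ℕ} (hn : 1 ≤ n) (π : Equiv.Perm (Fin n)) :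
    (ext0 π)⁻¹ (1 : Fin (n+1)) = Fin.succ (π⁻¹ ⟨0, hn⟩) := by
  rw [Equiv.Perm.inv_def, Equiv.symm_apply_eq, ext0_apply_succ, Equiv.Perm.coe_inv, Equiv.apply_symm_apply]
  apply Fin.ext
  simp [Fin.val_succ]
  omega

theorem toricMap_succ {n : ℕ} (hn : 1 ≤ n) (π : Equiv.Perm (Fin n)) (t : Fin n) :
    Fin.succ (toricMap n 1 hn π t) =
      ext0 π (t.succ + ((((π⁻¹ ⟨0, hn⟩ : Fin n) : ℕ) + 1 : ℕ) : Fin (n+1)))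
        + ((n : ℕ) : Fin (n+1)) := by
  have h1 : Fin.succ (toricMap n 1 hn π t) = toricAux n 1 π t.succ := by
    show Fin.succ (unext0 (toricAux n 1 π) _ t) = _
    simp only [unext0, Equiv.coe_fn_mk]
    exact Fin.succ_pred _ _
  rw [h1]
  unfold toricAux
  rw [Equiv.Perm.mul_apply, Equiv.Perm.mul_apply, finRotate_pow_apply, finRotate_pow_apply,
    Nat.cast_one, ext0_inv_one hn]
  norm_num [Fin.val_succ]

theorem blockT_val {n i j k : ℕ} (hij : i < j) (hjk : j < k) (hkn : k ≤ n) (t : Fin n) :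
    ((blockT n i j k hij hjk hkn) t : ℕ) = btFun i j k (t.val + 1) - 1 := rfl

theorem addn_mod {n v : ℕ} (h1 : 1 ≤ v) (h2 : v ≤ n) :
    (v + n % (n + 1)) % (n + 1) = v - 1 := by
  have hn' : n % (n+1) = n := Nat.mod_eq_of_lt (by omega)
  rw [hn']
  have h : v + n = (v - 1) + (n + 1) := by omega
  rw [h, Nat.add_mod_right, Nat.mod_eq_of_lt (by omega)]

theorem toric_blockT_pos {n i j k i' j' k' : ℕ} (hn : 1 ≤ n) (hi : 1 ≤ i) (hij : i < j)
    (hjk : j < k) (hkn : k ≤ n)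
    (hi' : i' = i - 1) (hj' : j' = j - 1) (hk' : k' = k - 1)
    (h1 : i' < j') (h2 : j' < k') (h3 : k' ≤ n) :
    toricMap n 1 hn (blockT n i j k hij hjk hkn) = blockT n i' j' k' h1 h2 h3 := by
  apply Equiv.ext; intro t
  have ht := t.isLt
  rw [← Fin.succ_inj, toricMap_succ]
  have hinv : (((blockT n i j k hij hjk hkn)⁻¹ ⟨0, hn⟩ : Fin n) : ℕ) = 0 := by
    have h : (((blockT n i j k hij hjk hkn)⁻¹ ⟨0, hn⟩ : Fin n) : ℕ)
        = btFun i (k - j + i) k 1 - 1 := rfl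
    rw [h]; unfold btFun; split_ifs <;> omega
  rw [hinv]
  set x := t.succ + (((0 : ℕ) + 1 : ℕ) : Fin (n+1)) with hxdef
  have hxval : (x : ℕ) = (t.val + 2) % (n + 1) := by
    rw [hxdef, Fin.val_add, Fin.val_succ, Fin.val_natCast]
    have h : (0 + 1) % (n + 1) = 1 := Nat.mod_eq_of_lt (by omega)
    rw [h]
  by_cases hwrap : t.val + 2 ≤ n
  · have hxv : (x : ℕ) = t.val + 2 := by rw [hxval]; exact Nat.mod_eq_of_lt (by omega)
    apply Fin.ext
    rw [Fin.val_add, Fin.val_natCast, Fin.val_succ,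
      ext0_apply_val _ x (by omega), blockT_val, blockT_val]
    simp only [Fin.val_mk]
    rw [hxv]
    have hb1 : 1 ≤ btFun i j k (t.val + 2 - 1 + 1) := btFun_lb (by omega)
    have hb2 : btFun i j k (t.val + 2 - 1 + 1) ≤ n := btFun_ub (by omega) (by omega) hkn
    rw [Nat.sub_add_cancel hb1, addn_mod hb1 hb2]
    unfold btFun; split_ifs <;> omega
  · have hxv : (x : ℕ) = 0 := by
      rw [hxval]
      have h : t.val + 2 = n + 1 := by omega
      rw [h, Nat.mod_self]
    have hx0 : x = 0 := Fin.ext (by simpa using hxv)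
    rw [hx0, ext0_zero, zero_add]
    apply Fin.ext
    rw [Fin.val_natCast, Fin.val_succ, blockT_val]
    have h : n % (n + 1) = n := Nat.mod_eq_of_lt (by omega)
    rw [h]
    unfold btFun; split_ifs <;> omega

theorem toric_blockT_zero {n j k j' k' k'' : ℕ} (hn : 1 ≤ n) (h0j : 0 < j) (hjk : j < k)
    (hkn : k ≤ n) (hj' : j' = j - 1) (hk' : k' = k - 1) (hk'' : k'' = n)
    (h1 : j' < k') (h2 : k' < k'') (h3 : k'' ≤ n) :
    toricMap n 1 hn (blockT n 0 j k h0j hjk hkn) = blockT n j' k' k'' h1 h2 h3 := by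
  apply Equiv.ext; intro t
  have ht := t.isLt
  rw [← Fin.succ_inj, toricMap_succ]
  have hinv : (((blockT n 0 j k h0j hjk hkn)⁻¹ ⟨0, hn⟩ : Fin n) : ℕ) = k - j := by
    have h : (((blockT n 0 j k h0j hjk hkn)⁻¹ ⟨0, hn⟩ : Fin n) : ℕ)
        = btFun 0 (k - j + 0) k 1 - 1 := rfl
    rw [h]; unfold btFun; split_ifs <;> omega
  rw [hinv]
  set x := t.succ + (((k - j : ℕ) + 1 : ℕ) : Fin (n+1)) with hxdef
  have hxval : (x : ℕ) = (t.val + 1 + (k - j + 1)) % (n + 1) := by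
    rw [hxdef, Fin.val_add, Fin.val_succ, Fin.val_natCast]
    have h : (k - j + 1) % (n + 1) = k - j + 1 := Nat.mod_eq_of_lt (by omega)
    rw [h]
  by_cases hwrap : t.val + 1 + (k - j + 1) ≤ n
  · have hxv : (x : ℕ) = t.val + 1 + (k - j + 1) := by
      rw [hxval]; exact Nat.mod_eq_of_lt (by omega)
    apply Fin.ext
    rw [Fin.val_add, Fin.val_natCast, Fin.val_succ,
      ext0_apply_val _ x (by omega), blockT_val, blockT_val]
    simp only [Fin.val_mk]
    rw [hxv]
    have hb1 : 1 ≤ btFun 0 j k (t.val + 1 + (k - j + 1) - 1 + 1) := btFun_lb (by omega)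
    have hb2 : btFun 0 j k (t.val + 1 + (k - j + 1) - 1 + 1) ≤ n :=
      btFun_ub (by omega) (by omega) hkn
    rw [Nat.sub_add_cancel hb1, addn_mod hb1 hb2]
    unfold btFun; split_ifs <;> omega
  · have hxv : (x : ℕ) = t.val + 1 + (k - j + 1) - (n + 1) := by
      rw [hxval, Nat.mod_eq_sub_mod (by omega), Nat.mod_eq_of_lt (by omega)]
    by_cases hz : t.val + 1 + (k - j + 1) = n + 1
    · have hxv0 : (x : ℕ) = 0 := by omega
      have hx0 : x = 0 := Fin.ext (by simpa using hxv0)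
      rw [hx0, ext0_zero, zero_add]
      apply Fin.ext
      rw [Fin.val_natCast, Fin.val_succ, blockT_val]
      have h : n % (n + 1) = n := Nat.mod_eq_of_lt (by omega)
      rw [h]
      unfold btFun; split_ifs <;> omega
    · apply Fin.ext
      rw [Fin.val_add, Fin.val_natCast, Fin.val_succ,
        ext0_apply_val _ x (by omega), blockT_val, blockT_val]
      simp only [Fin.val_mk]
      rw [hxv]
      have hb1 : 1 ≤ btFun 0 j k (t.val + 1 + (k - j + 1) - (n + 1) - 1 + 1) :=
        btFun_lb (by omega)
      have hb2 : btFun 0 j k (t.val + 1 + (k - j + 1) - (n + 1) - 1 + 1) ≤ n :=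
        btFun_ub (by omega) (by omega) hkn
      rw [Nat.sub_add_cancel hb1, addn_mod hb1 hb2]
      unfold btFun; split_ifs <;> omega

theorem rev_blockT {n i j k i' j' k' : ℕ} (hij : i < j) (hjk : j < k) (hkn : k ≤ n)
    (hi' : i' = n - k) (hj' : j' = n - j) (hk' : k' = n - i)
    (h1 : i' < j') (h2 : j' < k') (h3 : k' ≤ n) :
    revMap (blockT n i j k hij hjk hkn) = blockT n i' j' k' h1 h2 h3 := by
  ext t
  have ht := t.isLt
  simp only [revMap, Equiv.Perm.mul_apply, wrev, blockT, Equiv.coe_fn_mk]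
  unfold btFun; split_ifs <;> omega

/-- For every positive integer `n`, the set `T_n` is invariant
under the toric map `f̄` and under the reverse map `g`. -/
theorem stmt_6 (n : ℕ) (hn : 1 ≤ n) :
    toricMap n 1 hn '' blockTranspositions n = blockTranspositions n ∧
    revMap '' blockTranspositions n = blockTranspositions n := by
  constructor
  · apply Set.Subset.antisymm
    · rintro σ' ⟨σ, ⟨i, j, k, hij, hjk, hkn, rfl⟩, rfl⟩
      rcases Nat.eq_zero_or_pos i with hi | hi
      · subst hi
        rw [toric_blockT_zero hn hij hjk hkn rfl rfl rfl (by omega) (by omega) le_rfl]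
        exact ⟨j - 1, k - 1, n, by omega, by omega, le_rfl, rfl⟩
      · rw [toric_blockT_pos hn hi hij hjk hkn rfl rfl rfl (by omega) (by omega) (by omega)]
        exact ⟨i - 1, j - 1, k - 1, by omega, by omega, by omega, rfl⟩
    · rintro σ ⟨i, j, k, hij, hjk, hkn, rfl⟩
      rcases Nat.lt_or_ge k n with hk | hk
      · refine ⟨blockT n (i+1) (j+1) (k+1) (by omega) (by omega) (by omega),
          ⟨i+1, j+1, k+1, by omega, by omega, by omega, rfl⟩, ?_⟩
        exact toric_blockT_pos hn (by omega) (by omega) (by omega) (by omega)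
          (by omega) (by omega) (by omega) hij hjk hkn
      · have hkn' : k = n := by omega
        refine ⟨blockT n 0 (i+1) (j+1) (by omega) (by omega) (by omega),
          ⟨0, i+1, j+1, by omega, by omega, by omega, rfl⟩, ?_⟩
        exact toric_blockT_zero hn (by omega) (by omega) (by omega)
          (by omega) (by omega) (by omega) hij hjk hkn
  · apply Set.Subset.antisymm
    · rintro σ' ⟨σ, ⟨i, j, k, hij, hjk, hkn, rfl⟩, rfl⟩
      rw [rev_blockT hij hjk hkn rfl rfl rfl (by omega) (by omega) (by omega)]
      exact ⟨n - k, n - j, n - i, by omega, by omega, by omega, rfl⟩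
    · rintro σ ⟨i, j, k, hij, hjk, hkn, rfl⟩
      refine ⟨revMap (blockT n i j k hij hjk hkn), ?_, revMap_revMap _⟩
      rw [rev_blockT hij hjk hkn rfl rfl rfl (by omega) (by omega) (by omega)]
      exact ⟨n - k, n - j, n - i, by omega, by omega, by omega, rfl⟩
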